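/- arXiv:2103.04071 — 2 statements merged into one kernel-verified Lean document; each statement's English description precedes it below -/
import Mathlib

section
/- Let u ∈ L¹_loc, and for x ∈ ℝⁿ and r > 0 define φ(x,r) = inf_{q∈ℝ} ( ⨍_{B(x,r)} |u − q|^{1/2} )². If q_{x,r} realizes the infimum (i.e. (⨍_{B(x,r)} |u − q_{x,r}|^{1/2})² = φ(x,r)), then for any 0 < κ ≤ 1/2 one has |q_{x,r} − q_{x,κr}| ≤ 2κ^{−2n} (φ(x,r) + φ(x,κr)). -/
open MeasureTheory Set Metric ENNReal

set_option maxHeartbeats 1000000 in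
/-- Comparison of minimizing constants at two scales:
|q_{x,r} − q_{x,κr}| ≤ 2 κ^{−2n} (φ(x,r) + φ(x,κr)). -/
theorem stmt_9 (n : ℕ) (hn : 1 ≤ n) (u : EuclideanSpace ℝ (Fin n) → ℝ)
    (hu : LocallyIntegrable u volume)
    (x : EuclideanSpace ℝ (Fin n)) (r κ : ℝ) (hr : 0 < r)
    (hκ : 0 < κ) (hκ' : κ ≤ 1 / 2)
    (qr qκr : ℝ)
    (hqr : (⨍ y in ball x r, Real.sqrt |u y - qr|) ^ 2
      = ⨅ q : ℝ, (⨍ y in ball x r, Real.sqrt |u y - q|) ^ 2)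
    (hqκr : (⨍ y in ball x (κ * r), Real.sqrt |u y - qκr|) ^ 2
      = ⨅ q : ℝ, (⨍ y in ball x (κ * r), Real.sqrt |u y - q|) ^ 2) :
    |qr - qκr| ≤ 2 * κ ^ (-(2 * (n:ℤ))) *
      ((⨅ q : ℝ, (⨍ y in ball x r, Real.sqrt |u y - q|) ^ 2)
        + ⨅ q : ℝ, (⨍ y in ball x (κ * r), Real.sqrt |u y - q|) ^ 2) := by
  have hκr : 0 < κ * r := mul_pos hκ hr
  set s := ball x r
  set t := ball x (κ * r)
  have hts : t ⊆ s := ball_subset_ball (by nlinarith)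
  -- measures
  have hb0 : (0:ℝ≥0∞) < volume (ball (0 : EuclideanSpace ℝ (Fin n)) 1) :=
    measure_ball_pos _ _ one_pos
  have hbt : volume (ball (0 : EuclideanSpace ℝ (Fin n)) 1) < ⊤ := measure_ball_lt_top
  have hs_eq : volume s = ENNReal.ofReal (r ^ n) * volume (ball (0 : EuclideanSpace ℝ (Fin n)) 1) := by
    rw [show s = ball x r from rfl, Measure.addHaar_ball_of_pos volume x hr, finrank_euclideanSpace_fin]
  have ht_eq : volume t = ENNReal.ofReal ((κ * r) ^ n) * volume (ball (0 : EuclideanSpace ℝ (Fin n)) 1) := by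
    rw [show t = ball x (κ*r) from rfl, Measure.addHaar_ball_of_pos volume x hκr, finrank_euclideanSpace_fin]
  set M := (volume s).toReal with hM
  set m := (volume t).toReal with hm
  have hMpos : 0 < M := ENNReal.toReal_pos (measure_ball_pos _ _ hr).ne' measure_ball_lt_top.ne
  have hmpos : 0 < m := ENNReal.toReal_pos (measure_ball_pos _ _ hκr).ne' measure_ball_lt_top.ne
  set b := (volume (ball (0 : EuclideanSpace ℝ (Fin n)) 1)).toReal with hbdef
  have hMv : M = r ^ n * b := by
    rw [hM, hs_eq, ENNReal.toReal_mul, ENNReal.toReal_ofReal (by positivity)]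
  have hmv : m = (κ * r) ^ n * b := by
    rw [hm, ht_eq, ENNReal.toReal_mul, ENNReal.toReal_ofReal (by positivity)]
  have hmM : m = κ ^ n * M := by rw [hMv, hmv, mul_pow]; ring
  -- integrability
  have key : ∀ q : ℝ, IntegrableOn (fun y => Real.sqrt |u y - q|) s volume := by
    intro q
    have hus : IntegrableOn u s volume :=
      (hu.integrableOn_isCompact (isCompact_closedBall x r)).mono_set ball_subset_closedBall
    have h1 : IntegrableOn (fun y => 1 + |u y - q|) s volume := by
      refine (integrableOn_const measure_ball_lt_top.ne).add ?_
      exact ((hus.sub (integrableOn_const measure_ball_lt_top.ne)).abs)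
    refine Integrable.mono' h1 ?_ ?_
    · exact ((Real.continuous_sqrt.comp continuous_abs).comp_aestronglyMeasurable
        (hus.aestronglyMeasurable.sub aestronglyMeasurable_const))
    · filter_upwards with y
      rw [Real.norm_eq_abs, abs_of_nonneg (Real.sqrt_nonneg _)]
      have h0 : (0:ℝ) ≤ |u y - q| := abs_nonneg _
      nlinarith [Real.sq_sqrt h0, Real.sqrt_nonneg |u y - q|, sq_nonneg (Real.sqrt |u y - q| - 1)]
  have keyt : ∀ q : ℝ, IntegrableOn (fun y => Real.sqrt |u y - q|) t volume :=
    fun q => (key q).mono_set hts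
  -- averages
  set a : ℝ := ⨍ y in s, Real.sqrt |u y - qr| with ha
  set A : ℝ := ⨍ y in t, Real.sqrt |u y - qr| with hA
  set B : ℝ := ⨍ y in t, Real.sqrt |u y - qκr| with hB
  have hAnn : 0 ≤ A := by
    rw [hA, setAverage_eq]
    exact smul_nonneg (by positivity) (setIntegral_nonneg measurableSet_ball
      fun y _ => Real.sqrt_nonneg _)
  have hBnn : 0 ≤ B := by
    rw [hB, setAverage_eq]
    exact smul_nonneg (by positivity) (setIntegral_nonneg measurableSet_ball
      fun y _ => Real.sqrt_nonneg _)
  have hann : 0 ≤ a := by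
    rw [ha, setAverage_eq]
    exact smul_nonneg (by positivity) (setIntegral_nonneg measurableSet_ball
      fun y _ => Real.sqrt_nonneg _)
  -- step 1 : sqrt |qr - qκr| ≤ A + B
  have step1 : Real.sqrt |qr - qκr| ≤ A + B := by
    have hconst : Real.sqrt |qr - qκr| = ⨍ _y in t, Real.sqrt |qr - qκr| :=
      (setAverage_const (measure_ball_pos _ _ hκr).ne' measure_ball_lt_top.ne _).symm
    rw [hconst, hA, hB, setAverage_eq, setAverage_eq, setAverage_eq, smul_eq_mul,
      smul_eq_mul, smul_eq_mul, ← mul_add]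
    gcongr ?_ * ?_
    rw [← integral_add (keyt qr) (keyt qκr)]
    refine setIntegral_mono_on (integrableOn_const measure_ball_lt_top.ne)
      ((keyt qr).add (keyt qκr)) measurableSet_ball ?_
    intro y _
    have htri : |qr - qκr| ≤ |u y - qr| + |u y - qκr| := by
      have := abs_sub_abs_le_abs_sub (qr - u y) (qκr - u y)
      calc |qr - qκr| = |(u y - qκr) - (u y - qr)| := by ring_nf
        _ ≤ |u y - qκr| + |u y - qr| := abs_sub _ _
        _ = |u y - qr| + |u y - qκr| := add_comm _ _
    have h1 : Real.sqrt |qr - qκr| ≤ Real.sqrt (|u y - qr| + |u y - qκr|) :=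
      Real.sqrt_le_sqrt htri
    refine h1.trans ?_
    have ha0 : (0:ℝ) ≤ |u y - qr| := abs_nonneg _
    have hb0 : (0:ℝ) ≤ |u y - qκr| := abs_nonneg _
    nlinarith [Real.sq_sqrt ha0, Real.sq_sqrt hb0, Real.sq_sqrt (add_nonneg ha0 hb0),
      Real.sqrt_nonneg |u y - qr|, Real.sqrt_nonneg |u y - qκr|,
      Real.sqrt_nonneg (|u y - qr| + |u y - qκr|),
      mul_nonneg (Real.sqrt_nonneg |u y - qr|) (Real.sqrt_nonneg |u y - qκr|)]
  -- step 2 : A ≤ κ⁻ⁿ * a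
  set c : ℝ := (κ ^ n)⁻¹ with hc
  have hκn : (0:ℝ) < κ ^ n := pow_pos hκ n
  have hcpos : 0 < c := inv_pos.2 hκn
  have hc1 : 1 ≤ c := by
    rw [hc]
    exact (one_le_inv₀ hκn).2 (pow_le_one₀ hκ.le (by linarith))
  have step2 : A ≤ c * a := by
    have hint : ∫ y in t, Real.sqrt |u y - qr| ≤ ∫ y in s, Real.sqrt |u y - qr| := by
      refine setIntegral_mono_set (key qr) ?_ (HasSubset.Subset.eventuallyLE hts)
      filter_upwards with y using Real.sqrt_nonneg _
    rw [hA, ha, setAverage_eq, setAverage_eq, smul_eq_mul, smul_eq_mul]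
    calc (volume t).toReal⁻¹ * ∫ y in t, Real.sqrt |u y - qr|
        ≤ (volume t).toReal⁻¹ * ∫ y in s, Real.sqrt |u y - qr| := by
          gcongr
      _ = c * ((volume s).toReal⁻¹ * ∫ y in s, Real.sqrt |u y - qr|) := by
          rw [← hm, ← hM, hmM, hc]
          field_simp
  -- zpow rewriting
  have hcz : κ ^ (-(2 * (n:ℤ))) = c ^ 2 := by
    rw [zpow_neg, show (2 * (n:ℤ)) = ((2 * n : ℕ) : ℤ) by push_cast; ring, zpow_natCast,
      hc, inv_pow, ← pow_mul, Nat.mul_comm]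
  -- conclusion
  rw [← hqr, ← hqκr, hcz]
  have hD : |qr - qκr| = (Real.sqrt |qr - qκr|) ^ 2 := (Real.sq_sqrt (abs_nonneg _)).symm
  calc |qr - qκr| = (Real.sqrt |qr - qκr|) ^ 2 := hD
    _ ≤ (A + B) ^ 2 := by
        have := pow_le_pow_left₀ (Real.sqrt_nonneg _) step1 2
        exact this
    _ ≤ 2 * c ^ 2 * (a ^ 2 + B ^ 2) := by
        nlinarith [step2, hAnn, hBnn, hann, hc1, hcpos.le, sq_nonneg (A - B),
          mul_nonneg (sub_nonneg.2 step2) (add_nonneg (mul_nonneg hcpos.le hann) hAnn),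
          mul_nonneg (sub_nonneg.2 hc1) (sq_nonneg B),
          mul_nonneg (mul_nonneg (sub_nonneg.2 hc1) hcpos.le) (sq_nonneg B)]
end

section
/- Let u be locally integrable, x ∈ ℝⁿ, r > 0, and let q_{x,r} minimize q ↦ (⨍_{B(x,r)} |u − q|^{1/2})². Then |q_{x,r}| ≤ 2 φ(x,r) + 2 (⨍_{B(x,r)} |u|^{1/2})² ≤ 4 r^{−n} ω_n^{−1} ‖u‖_{L¹(B(x,r))}, where φ(x,r) is the minimal value and ω_n is the volume of the unit ball. -/
open MeasureTheory Set Metric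

private lemma sqrt_add_le' (a b : ℝ) (ha : 0 ≤ a) (hb : 0 ≤ b) :
    Real.sqrt (a + b) ≤ Real.sqrt a + Real.sqrt b := by
  have := Real.sqrt_le_sqrt (show a + b ≤ (Real.sqrt a + Real.sqrt b)^2 by
    nlinarith [Real.sq_sqrt ha, Real.sq_sqrt hb,
      mul_nonneg (Real.sqrt_nonneg a) (Real.sqrt_nonneg b)])
  rwa [Real.sqrt_sq (by positivity)] at this

/-- Bound on the minimizing constant:
|q_{x,r}| ≤ 2φ(x,r) + 2(⨍|u|^{1/2})² ≤ 4 r^{−n} ω_n^{−1} ‖u‖_{L¹(B(x,r))}. -/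
theorem stmt_11 (n : ℕ) (hn : 1 ≤ n) (u : EuclideanSpace ℝ (Fin n) → ℝ)
    (hu : LocallyIntegrable u volume)
    (x : EuclideanSpace ℝ (Fin n)) (r : ℝ) (hr : 0 < r) (q : ℝ)
    (hq : (⨍ y in ball x r, Real.sqrt |u y - q|) ^ 2
      = ⨅ c : ℝ, (⨍ y in ball x r, Real.sqrt |u y - c|) ^ 2) :
    |q| ≤ 2 * (⨅ c : ℝ, (⨍ y in ball x r, Real.sqrt |u y - c|) ^ 2)
        + 2 * (⨍ y in ball x r, Real.sqrt |u y|) ^ 2 ∧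
    2 * (⨅ c : ℝ, (⨍ y in ball x r, Real.sqrt |u y - c|) ^ 2)
        + 2 * (⨍ y in ball x r, Real.sqrt |u y|) ^ 2
      ≤ 4 * r ^ (-(n:ℤ)) *
        ((volume (ball (0 : EuclideanSpace ℝ (Fin n)) 1)).toReal)⁻¹ *
        ∫ y in ball x r, |u y| := by
  haveI : Nonempty (Fin n) := ⟨⟨0, hn⟩⟩
  haveI : Nontrivial (EuclideanSpace ℝ (Fin n)) := inferInstance
  set B := ball x r with hBdef
  have hB0 : volume B ≠ 0 := (measure_ball_pos volume x hr).ne'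
  have hBT : volume B ≠ ⊤ := measure_ball_lt_top.ne
  haveI hfin : IsFiniteMeasure (volume.restrict B) :=
    ⟨by rw [Measure.restrict_apply_univ]; exact hBT.lt_top⟩
  haveI : NeZero (volume.restrict B) :=
    ⟨by simp [Measure.restrict_eq_zero, hB0]⟩
  -- integrability
  have hui : IntegrableOn u B volume :=
    (hu.integrableOn_isCompact (isCompact_closedBall x r)).mono_set ball_subset_closedBall
  have hsqint : ∀ c : ℝ, IntegrableOn (fun y => Real.sqrt |u y - c|) B volume := by
    intro c
    have h1 : IntegrableOn (fun y => u y - c) B volume :=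
      hui.sub (integrableOn_const hBT)
    have hms : AEStronglyMeasurable (fun y => Real.sqrt |u y - c|) (volume.restrict B) := by
      have h2 := h1.aestronglyMeasurable.norm
      simp only [Real.norm_eq_abs] at h2
      exact Real.continuous_sqrt.comp_aestronglyMeasurable h2
    refine Integrable.mono' ((integrable_const 1).add h1.abs) hms ?_
    filter_upwards with y
    rw [Real.norm_eq_abs, abs_of_nonneg (Real.sqrt_nonneg _), Pi.add_apply]
    nlinarith [sq_nonneg (Real.sqrt |u y - c| - 1), Real.sq_sqrt (abs_nonneg (u y - c)),
      Real.sqrt_nonneg |u y - c|]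
  have hsq0 : IntegrableOn (fun y => Real.sqrt |u y|) B volume := by
    simpa using hsqint 0
  -- averages nonneg
  have havg : ∀ c : ℝ, 0 ≤ ⨍ y in B, Real.sqrt |u y - c| := by
    intro c
    rw [setAverage_eq]
    exact smul_nonneg (by positivity) (integral_nonneg fun y => Real.sqrt_nonneg _)
  have havg0 : 0 ≤ ⨍ y in B, Real.sqrt |u y| := by
    have := havg 0; simpa using this
  have hbdd : BddBelow (Set.range fun c : ℝ => (⨍ y in B, Real.sqrt |u y - c|) ^ 2) :=
    ⟨0, by rintro _ ⟨c, rfl⟩; positivity⟩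
  have hφ0 : (⨅ c : ℝ, (⨍ y in B, Real.sqrt |u y - c|) ^ 2)
      ≤ (⨍ y in B, Real.sqrt |u y|) ^ 2 := by
    have := ciInf_le hbdd 0
    simpa using this
  -- Part 1 : pointwise and averaged triangle inequality
  have key : Real.sqrt |q| ≤ (⨍ y in B, Real.sqrt |u y - q|) + ⨍ y in B, Real.sqrt |u y| := by
    have hptw : ∀ y, Real.sqrt |q| ≤ Real.sqrt |u y - q| + Real.sqrt |u y| := by
      intro y
      have h1 : |q| ≤ |u y - q| + |u y| := by
        have := abs_sub (u y - q) (u y)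
        simpa [abs_sub_comm] using this
      exact (Real.sqrt_le_sqrt h1).trans (sqrt_add_le' _ _ (abs_nonneg _) (abs_nonneg _))
    calc Real.sqrt |q| = ⨍ _y in B, Real.sqrt |q| :=
          (setAverage_const hB0 hBT _).symm
      _ ≤ ⨍ y in B, (Real.sqrt |u y - q| + Real.sqrt |u y|) := by
          rw [setAverage_eq, setAverage_eq]
          exact smul_le_smul_of_nonneg_left
            (integral_mono (integrable_const _) ((hsqint q).add hsq0)
              (fun y => hptw y)) (by positivity)
      _ = (⨍ y in B, Real.sqrt |u y - q|) + ⨍ y in B, Real.sqrt |u y| := by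
          rw [setAverage_eq, setAverage_eq, setAverage_eq,
            integral_add (hsqint q) hsq0, smul_add]
  have part1 : |q| ≤ 2 * (⨅ c : ℝ, (⨍ y in B, Real.sqrt |u y - c|) ^ 2)
      + 2 * (⨍ y in B, Real.sqrt |u y|) ^ 2 := by
    rw [← hq]
    have h2 : |q| = (Real.sqrt |q|) ^ 2 := (Real.sq_sqrt (abs_nonneg q)).symm
    have h3 := pow_le_pow_left₀ (Real.sqrt_nonneg |q|) key 2
    nlinarith [sq_nonneg ((⨍ y in B, Real.sqrt |u y - q|) - ⨍ y in B, Real.sqrt |u y|), h3, h2]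
  refine ⟨part1, ?_⟩
  -- Part 2 : Jensen + volume computation
  have jensen : (⨍ y in B, Real.sqrt |u y|) ^ 2 ≤ ⨍ y in B, |u y| := by
    have hconv : ConvexOn ℝ (Ici (0:ℝ)) fun t : ℝ => t ^ 2 :=
      (strictConvexOn_pow le_rfl).convexOn
    have := hconv.map_average_le (μ := volume.restrict B)
      (f := fun y => Real.sqrt |u y|)
      ((continuous_pow 2).continuousOn) isClosed_Ici
      (Filter.Eventually.of_forall fun y => Real.sqrt_nonneg _)
      hsq0 ?_
    · convert this using 2
      · exact funext fun y => (Real.sq_sqrt (abs_nonneg (u y))).symm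
    · have : (fun y => Real.sqrt |u y| ^ 2) = fun y => |u y| :=
        funext fun y => Real.sq_sqrt (abs_nonneg (u y))
      rw [show ((fun t : ℝ => t ^ 2) ∘ fun y => Real.sqrt |u y|)
          = fun y => |u y| from funext fun y => Real.sq_sqrt (abs_nonneg (u y))]
      exact hui.abs
  have hvol : (volume B).toReal = r ^ n * (volume (ball (0 : EuclideanSpace ℝ (Fin n)) 1)).toReal := by
    rw [Measure.addHaar_ball volume x hr.le, ENNReal.toReal_mul, ENNReal.toReal_ofReal (by positivity),
      finrank_euclideanSpace_fin]
  have hω : 0 < (volume (ball (0 : EuclideanSpace ℝ (Fin n)) 1)).toReal :=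
    ENNReal.toReal_pos (measure_ball_pos volume 0 one_pos).ne' measure_ball_lt_top.ne
  have havgeq : ⨍ y in B, |u y| =
      (r ^ n * (volume (ball (0 : EuclideanSpace ℝ (Fin n)) 1)).toReal)⁻¹ * ∫ y in B, |u y| := by
    rw [setAverage_eq, measureReal_def, hvol, smul_eq_mul]
  have hint_nonneg : 0 ≤ ∫ y in B, |u y| := integral_nonneg fun y => abs_nonneg _
  have hrhs : 4 * r ^ (-(n:ℤ)) *
      ((volume (ball (0 : EuclideanSpace ℝ (Fin n)) 1)).toReal)⁻¹ * ∫ y in B, |u y|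
      = 4 * (⨍ y in B, |u y|) := by
    rw [havgeq, zpow_neg, zpow_natCast, mul_inv]
    ring
  rw [hrhs]
  nlinarith [hφ0, jensen, havg0]
end
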